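/- Let A ∈ SL(2,ℤ) be hyperbolic with eigenvalues λ and λ⁻¹ where |λ| > 1, and let v_s ∈ ℝ² be a unit eigenvector with A v_s = λ⁻¹ v_s. Let U ⊆ 𝕋² be a nonempty open set. Then there exist ν ∈ (0,1) and C ≥ 1, depending only on A and U, such that for every integer T ≥ 0 with C|λ|^{−T} ≤ 1 and every x ∈ ℝ², the set { s ∈ ℝ : π(A^{−j}(x + s v_s)) ∉ U for all integers 0 ≤ j ≤ T } is ν-porous up to scale C|λ|^{−T}. -/

import Mathlib

open Set

/-- A set `X ⊆ ℝ` is `ν`-porous up to scale `h`: every interval `I = [a,b]` with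
`h ≤ |I| ≤ 1` contains a subinterval `J = [c,d]` with `|J| = ν|I|` and `J ∩ X = ∅`. -/
def IsPorousUpTo (ν h : ℝ) (X : Set ℝ) : Prop :=
  ∀ a b : ℝ, h ≤ b - a → b - a ≤ 1 →
    ∃ c d : ℝ, a ≤ c ∧ d ≤ b ∧ d - c = ν * (b - a) ∧ Set.Icc c d ∩ X = ∅

/-- The canonical projection `ℝ² → 𝕋² = (ℝ/ℤ) × (ℝ/ℤ)`. -/
noncomputable def torusProj (x : EuclideanSpace ℝ (Fin 2)) :
    AddCircle (1:ℝ) × AddCircle (1:ℝ) :=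
  (((x 0 : ℝ) : AddCircle (1:ℝ)), ((x 1 : ℝ) : AddCircle (1:ℝ)))


open Metric

section PorosityHelpers

lemma irrational_of_int_quadratic (t : ℤ) (μ : ℝ) (hq : μ^2 - t*μ + 1 = 0) (hμ1 : |μ| < 1) :
    Irrational μ := by
  rintro ⟨q, rfl⟩
  have hqQ : (q:ℚ)^2 - t*q + 1 = 0 := by exact_mod_cast hq
  set n : ℤ := q.num with hn
  set d : ℤ := (q.den : ℤ) with hd
  have hd0 : (0:ℤ) < d := by rw [hd]; exact_mod_cast q.pos
  have hdQ : (d:ℚ) ≠ 0 := by positivity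
  have hnum : (n:ℚ) = q * d := by
    rw [hn, hd]
    have hden : ((q.den:ℤ):ℚ) ≠ 0 := by exact_mod_cast q.den_nz
    exact ((eq_div_iff hden).mp (by exact_mod_cast (Rat.num_div_den q).symm)).symm
  have key : (n:ℚ)^2 - t*n*d + d^2 = 0 := by
    rw [hnum]; ring_nf; nlinarith [hqQ]
  have keyZ : n^2 - t*n*d + d^2 = 0 := by exact_mod_cast key
  have hdvd : d ∣ n^2 := ⟨t*n - d, by linarith [keyZ]⟩
  have hcop : IsCoprime n d := by
    rw [Int.isCoprime_iff_gcd_eq_one]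
    simpa [Int.gcd, hd] using q.reduced
  have : IsUnit d := (hcop.symm.pow_right (n := 2)).isUnit_of_dvd' dvd_rfl hdvd
  have hd1 : d = 1 := by
    rcases Int.isUnit_iff.mp this with h | h
    · exact h
    · omega
  have hq1 : n^2 - t*n + 1 = 0 := by rw [hd1] at keyZ; linarith
  have : IsUnit n := IsUnit.of_mul_eq_one (t - n) (by ring_nf; linarith [hq1])
  have habs : |(q:ℝ)| = 1 := by
    rcases Int.isUnit_iff.mp this with h | h <;>
    · have : (q:ℚ) = n / d := (Rat.num_div_den q).symm
      rw [this, h, hd1] ; norm_num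
  linarith [habs ▸ hμ1]

lemma denseRange_irrational_orbit (α : ℝ) (hα : Irrational α) :
    DenseRange (fun n : ℤ => ((n * α : ℝ) : AddCircle (1:ℝ))) := by
  -- the subgroup ℤα + ℤ of ℝ
  set S : AddSubgroup ℝ :=
    { carrier := {x | ∃ m k : ℤ, x = m * α + k}
      add_mem' := by
        rintro x y ⟨m, k, rfl⟩ ⟨m', k', rfl⟩
        exact ⟨m + m', k + k', by push_cast; ring⟩
      zero_mem' := ⟨0, 0, by norm_num⟩
      neg_mem' := by
        rintro x ⟨m, k, rfl⟩
        exact ⟨-m, -k, by push_cast; ring⟩ } with hS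
  have hSdense : Dense (S : Set ℝ) := by
    rcases S.dense_or_cyclic with h | ⟨a, ha⟩
    · exact h
    · exfalso
      have hαS : α ∈ S := ⟨1, 0, by norm_num⟩
      have h1S : (1:ℝ) ∈ S := ⟨0, 1, by norm_num⟩
      rw [ha, AddSubgroup.mem_closure_singleton] at hαS h1S
      obtain ⟨m, hm⟩ := hαS
      obtain ⟨k, hk⟩ := h1S
      have hk0 : (k:ℝ) ≠ 0 := by
        intro h
        rw [zsmul_eq_mul, h, zero_mul] at hk; norm_num at hk
      refine hα ⟨(m:ℚ) / (k:ℚ), ?_⟩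
      have ha' : a = 1 / (k:ℝ) := by
        rw [zsmul_eq_mul] at hk; field_simp [mul_comm] at hk ⊢; linarith [hk]
      rw [zsmul_eq_mul, ha'] at hm
      push_cast
      rw [← hm]; ring
  -- push to the circle
  have hcont : Continuous ((↑) : ℝ → AddCircle (1:ℝ)) := continuous_quotient_mk'
  have hsurj : Function.Surjective ((↑) : ℝ → AddCircle (1:ℝ)) := Quotient.mk''_surjective
  have himage : Dense (((↑) : ℝ → AddCircle (1:ℝ)) '' S) :=
    hsurj.denseRange.dense_image hcont hSdense
  refine himage.mono ?_
  rintro z ⟨x, ⟨m, k, rfl⟩, rfl⟩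
  refine ⟨m, ?_⟩
  have : ((k:ℝ) : AddCircle (1:ℝ)) = 0 := by
    rw [AddCircle.coe_eq_zero_iff]
    exact ⟨k, by simp⟩
  push_cast
  rw [QuotientAddGroup.mk_add] at *
  simp [this]

lemma addCircle_dist_le (a b : ℝ) :
    dist ((a : AddCircle (1:ℝ))) ((b : AddCircle (1:ℝ))) ≤ |a - b| := by
  rw [dist_eq_norm]
  have h : (a : AddCircle (1:ℝ)) - b = ((a - b : ℝ) : AddCircle (1:ℝ)) :=
    (QuotientAddGroup.mk_sub _ a b).symm
  rw [h]
  exact QuotientAddGroup.norm_mk_le_norm.trans_eq (Real.norm_eq_abs (a - b))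

lemma line_hits (v0 v1 : ℝ) (hv0 : v0 ≠ 0) (hα : Irrational (v1 / v0))
    (p : AddCircle (1:ℝ) × AddCircle (1:ℝ)) (ρ : ℝ) (hρ : 0 < ρ)
    (z : AddCircle (1:ℝ) × AddCircle (1:ℝ)) :
    ∃ t : ℝ, z + (((t * v0 : ℝ) : AddCircle (1:ℝ)), ((t * v1 : ℝ) : AddCircle (1:ℝ)))
      ∈ ball p ρ := by
  obtain ⟨y1, hy1⟩ := Quotient.mk''_surjective z.1
  obtain ⟨c1, hc1⟩ := Quotient.mk''_surjective p.1
  set α := v1 / v0 with hαdef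
  have hd := denseRange_irrational_orbit α hα
  rw [Metric.denseRange_iff] at hd
  obtain ⟨n, hn⟩ := hd (p.2 - z.2 - (((c1 - y1) * α : ℝ) : AddCircle (1:ℝ))) ρ hρ
  refine ⟨(c1 - y1 + n) / v0, ?_⟩
  have ht0 : (c1 - y1 + (n:ℝ)) / v0 * v0 = c1 - y1 + n := div_mul_cancel₀ _ hv0
  have ht1 : (c1 - y1 + (n:ℝ)) / v0 * v1 = (c1 - y1) * α + n * α := by
    rw [hαdef]; field_simp
  have hπn : (((n:ℝ)) : AddCircle (1:ℝ)) = 0 := by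
    rw [AddCircle.coe_eq_zero_iff]; exact ⟨n, by simp⟩
  have e1 : (((c1 - y1 + (n:ℝ)) : ℝ) : AddCircle (1:ℝ)) = p.1 - z.1 := by
    rw [← hy1, ← hc1, show c1 - y1 + (n:ℝ) = (c1 + n) - y1 by ring,
      QuotientAddGroup.mk_sub, QuotientAddGroup.mk_add, hπn, add_zero]
  rw [mem_ball, Prod.dist_eq]
  apply max_lt
  · have : (z + (((((c1 - y1 + (n:ℝ)) / v0 * v0 : ℝ)) : AddCircle (1:ℝ)),
        ((((c1 - y1 + (n:ℝ)) / v0 * v1 : ℝ)) : AddCircle (1:ℝ)))).1 = p.1 := by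
      rw [Prod.fst_add, ht0, e1, add_sub_cancel]
    rw [this]; simpa using hρ
  · have h2 : (z + (((((c1 - y1 + (n:ℝ)) / v0 * v0 : ℝ)) : AddCircle (1:ℝ)),
        ((((c1 - y1 + (n:ℝ)) / v0 * v1 : ℝ)) : AddCircle (1:ℝ)))).2
        = z.2 + (((c1 - y1) * α : ℝ) : AddCircle (1:ℝ)) + (((n:ℝ) * α : ℝ) : AddCircle (1:ℝ)) := by
      rw [Prod.snd_add, ht1, QuotientAddGroup.mk_add]; abel
    rw [h2, dist_eq_norm]
    rw [show z.2 + (((c1 - y1) * α : ℝ) : AddCircle (1:ℝ)) + (((n:ℝ) * α : ℝ) : AddCircle (1:ℝ)) - p.2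
      = (((n:ℝ) * α : ℝ) : AddCircle (1:ℝ)) - (p.2 - z.2 - (((c1 - y1) * α : ℝ) : AddCircle (1:ℝ))) by abel]
    rw [← dist_eq_norm, dist_comm]
    exact hn

/-- Uniform hitting time: some `L` works for all starting points. -/
lemma uniform_line_hits (v0 v1 : ℝ) (hv0 : v0 ≠ 0) (hα : Irrational (v1 / v0))
    (p : AddCircle (1:ℝ) × AddCircle (1:ℝ)) (ρ : ℝ) (hρ : 0 < ρ) :
    ∃ L : ℝ, 0 < L ∧ ∀ z : AddCircle (1:ℝ) × AddCircle (1:ℝ),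
      ∃ t : ℝ, |t| ≤ L ∧
        z + (((t * v0 : ℝ) : AddCircle (1:ℝ)), ((t * v1 : ℝ) : AddCircle (1:ℝ))) ∈ ball p ρ := by
  haveI : Fact ((0:ℝ) < 1) := ⟨one_pos⟩
  -- for each z choose a hitting time
  choose tf htf using line_hits v0 v1 hv0 hα p ρ hρ
  -- open neighborhoods on which the same time works
  set V : (AddCircle (1:ℝ) × AddCircle (1:ℝ)) → Set (AddCircle (1:ℝ) × AddCircle (1:ℝ)) :=
    fun z => (fun w => w + (((tf z * v0 : ℝ) : AddCircle (1:ℝ)),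
      ((tf z * v1 : ℝ) : AddCircle (1:ℝ)))) ⁻¹' ball p ρ with hV
  have hVopen : ∀ z, IsOpen (V z) := by
    intro z
    exact (isOpen_ball).preimage (by continuity)
  have hVmem : ∀ z, z ∈ V z := fun z => htf z
  obtain ⟨F, hF⟩ := IsCompact.elim_finite_subcover isCompact_univ V hVopen
    (fun z _ => mem_iUnion.2 ⟨z, hVmem z⟩)
  have hFne : F.Nonempty := by
    rcases hF (mem_univ (0 : AddCircle (1:ℝ) × AddCircle (1:ℝ))) with h
    simp only [mem_iUnion] at h
    obtain ⟨i, hi, _⟩ := h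
    exact ⟨i, hi⟩
  obtain ⟨L0, hL0⟩ := (F.image (fun z => |tf z|)).exists_le
  have hL0' : ∀ i ∈ F, |tf i| ≤ L0 := fun i hi => hL0 _ (Finset.mem_image_of_mem _ hi)
  have hL0pos : 0 < L0 + 1 := by
    obtain ⟨i0, hi0⟩ := hFne
    have := hL0' i0 hi0
    have := abs_nonneg (tf i0)
    linarith
  refine ⟨L0 + 1, hL0pos, fun z => ?_⟩
  obtain ⟨i, hiF, hz⟩ := Set.mem_iUnion₂.1 (hF (mem_univ z))
  exact ⟨tf i, by linarith [hL0' i hiF], hz⟩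

lemma interval_hit (v0 v1 : ℝ) (hv0 : v0 ≠ 0) (hα : Irrational (v1 / v0))
    (hv0' : |v0| ≤ 1) (hv1' : |v1| ≤ 1)
    (U : Set (AddCircle (1:ℝ) × AddCircle (1:ℝ))) (hUopen : IsOpen U) (hUne : U.Nonempty) :
    ∃ K r : ℝ, 1 ≤ K ∧ 0 < r ∧ r ≤ 1 ∧ ∀ y0 y1 lo hi : ℝ, K ≤ hi - lo →
      ∃ c', lo ≤ c' ∧ c' + r ≤ hi ∧ ∀ u ∈ Icc c' (c' + r),
        (((y0 + u * v0 : ℝ) : AddCircle (1:ℝ)), ((y1 + u * v1 : ℝ) : AddCircle (1:ℝ))) ∈ U := by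
  obtain ⟨p, hp⟩ := hUne
  obtain ⟨ρ0, hρ0, hball0⟩ := Metric.isOpen_iff.1 hUopen p hp
  set ρ := min ρ0 1 with hρdef
  have hρ : 0 < ρ := lt_min hρ0 one_pos
  have hρ1 : ρ ≤ 1 := min_le_right _ _
  have hball : ball p ρ ⊆ U := (ball_subset_ball (min_le_left _ _)).trans hball0
  obtain ⟨L, hL, hhit⟩ := uniform_line_hits v0 v1 hv0 hα p (ρ/2) (by positivity)
  set r := ρ/4 with hrdef
  refine ⟨2*L + 2*r + 1, r, by rw [hrdef]; linarith, by positivity, by rw [hrdef]; linarith, ?_⟩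
  intro y0 y1 lo hi hK
  set mid := (lo + hi)/2 with hmid
  obtain ⟨t, htL, htball⟩ := hhit (((y0 + mid * v0 : ℝ) : AddCircle (1:ℝ)),
    ((y1 + mid * v1 : ℝ) : AddCircle (1:ℝ)))
  have habs := abs_le.1 htL
  refine ⟨mid + t, by simp only [hmid]; cases habs; linarith,
    by simp only [hmid]; cases habs; linarith, ?_⟩
  intro u hu
  apply hball
  have hdist1 : dist (((y0 + u * v0 : ℝ) : AddCircle (1:ℝ)), ((y1 + u * v1 : ℝ) : AddCircle (1:ℝ)))
      (((y0 + (mid + t) * v0 : ℝ) : AddCircle (1:ℝ)), ((y1 + (mid + t) * v1 : ℝ) : AddCircle (1:ℝ))) ≤ r := by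
    rw [Prod.dist_eq]
    apply max_le
    · refine (addCircle_dist_le _ _).trans ?_
      have : |y0 + u * v0 - (y0 + (mid + t) * v0)| = |u - (mid + t)| * |v0| := by
        rw [← abs_mul]; ring_nf
      rw [this]
      calc |u - (mid + t)| * |v0| ≤ |u - (mid + t)| * 1 := by
            apply mul_le_mul_of_nonneg_left hv0' (abs_nonneg _)
        _ ≤ r := by
            rw [mul_one, abs_le]
            obtain ⟨h1, h2⟩ := hu
            constructor <;> linarith
    · refine (addCircle_dist_le _ _).trans ?_
      have : |y1 + u * v1 - (y1 + (mid + t) * v1)| = |u - (mid + t)| * |v1| := by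
        rw [← abs_mul]; ring_nf
      rw [this]
      calc |u - (mid + t)| * |v1| ≤ |u - (mid + t)| * 1 := by
            apply mul_le_mul_of_nonneg_left hv1' (abs_nonneg _)
        _ ≤ r := by
            rw [mul_one, abs_le]
            obtain ⟨h1, h2⟩ := hu
            constructor <;> linarith
  have hmidt : (((y0 + (mid + t) * v0 : ℝ) : AddCircle (1:ℝ)),
      ((y1 + (mid + t) * v1 : ℝ) : AddCircle (1:ℝ))) ∈ ball p (ρ/2) := by
    have e1 : ((y0 + (mid + t) * v0 : ℝ) : AddCircle (1:ℝ))
        = ((y0 + mid * v0 : ℝ) : AddCircle (1:ℝ)) + ((t * v0 : ℝ) : AddCircle (1:ℝ)) := by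
      rw [← QuotientAddGroup.mk_add]; ring_nf
    have e2 : ((y1 + (mid + t) * v1 : ℝ) : AddCircle (1:ℝ))
        = ((y1 + mid * v1 : ℝ) : AddCircle (1:ℝ)) + ((t * v1 : ℝ) : AddCircle (1:ℝ)) := by
      rw [← QuotientAddGroup.mk_add]; ring_nf
    rw [e1, e2]
    exact htball
  rw [mem_ball] at hmidt ⊢
  calc dist (((y0 + u * v0 : ℝ) : AddCircle (1:ℝ)), ((y1 + u * v1 : ℝ) : AddCircle (1:ℝ))) p
      ≤ _ + _ := dist_triangle _ (((y0 + (mid + t) * v0 : ℝ) : AddCircle (1:ℝ)),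
        ((y1 + (mid + t) * v1 : ℝ) : AddCircle (1:ℝ))) p
    _ < ρ := by
        have : r + ρ/2 < ρ := by rw [hrdef]; linarith
        linarith [hdist1, hmidt]

end PorosityHelpers

set_option maxHeartbeats 2000000 in
/-- **Porosity along stable lines for hyperbolic toral automorphisms.** Let `A ∈ SL(2,ℤ)`
be hyperbolic with eigenvalues `l, l⁻¹`, `|l| > 1`, and let `vs` be a unit stable
eigenvector, `A vs = l⁻¹ vs`. For every nonempty open `U ⊆ 𝕋²` there are `ν ∈ (0,1)` and
`C ≥ 1` such that for every `T ≥ 0` with `C |l|^{-T} ≤ 1` and every `x ∈ ℝ²`, the set of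
`s ∈ ℝ` whose point `x + s vs` has backward orbit `A^{-j}(x + s vs)`, `0 ≤ j ≤ T`, avoiding
`U` is `ν`-porous up to scale `C |l|^{-T}`. -/
theorem stable_line_porosity (A : Matrix (Fin 2) (Fin 2) ℤ) (hdet : A.det = 1)
    (l : ℝ) (hl : 1 < |l|)
    (vs : EuclideanSpace ℝ (Fin 2)) (hvs : ‖vs‖ = 1)
    (heig : (A.map (Int.cast : ℤ → ℝ)).mulVec vs = l⁻¹ • vs)
    (U : Set (AddCircle (1:ℝ) × AddCircle (1:ℝ))) (hUopen : IsOpen U) (hUne : U.Nonempty) :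
    ∃ ν ∈ Set.Ioo (0:ℝ) 1, ∃ C : ℝ, 1 ≤ C ∧
      ∀ T : ℕ, C / |l| ^ T ≤ 1 → ∀ x : EuclideanSpace ℝ (Fin 2),
        IsPorousUpTo ν (C / |l| ^ T)
          {s : ℝ | ∀ j : ℕ, j ≤ T →
            torusProj (WithLp.toLp 2 (((A.map (Int.cast : ℤ → ℝ))⁻¹ ^ j).mulVec (x + s • vs))) ∉ U} := by
  classical
  have hl0 : l ≠ 0 := by
    intro h; rw [h] at hl; norm_num at hl
  have hlabs : (0:ℝ) < |l| := lt_trans one_pos hl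
  set M := A.map (Int.cast : ℤ → ℝ) with hM
  -- determinant of the real matrix
  have hdetM : M.det = 1 := by
    have h := RingHom.map_det (Int.castRingHom ℝ) A
    rw [hdet] at h
    simpa [hM] using h.symm
  -- inverse acts on vs by multiplication with l
  have hMvs : M.mulVec (l • vs) = vs := by
    rw [Matrix.mulVec_smul, heig, smul_smul, mul_inv_cancel₀ hl0, one_smul]
  have hinvM : M⁻¹ * M = 1 := Matrix.nonsing_inv_mul M (by rw [hdetM]; exact isUnit_one)
  have hMinv : M⁻¹.mulVec vs = l • vs := by
    conv_lhs => rw [← hMvs]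
    rw [Matrix.mulVec_mulVec, hinvM, Matrix.one_mulVec]
  have hstable : ∀ j : ℕ, (M⁻¹ ^ j).mulVec vs = l ^ j • vs := by
    intro j; induction j with
    | zero => simp [Matrix.one_mulVec]
    | succ n ih =>
        rw [pow_succ, ← Matrix.mulVec_mulVec, hMinv, Matrix.mulVec_smul, ih, smul_smul,
          pow_succ]
        ring_nf
  -- coordinates of vs
  have hsum : vs 0 ^ 2 + vs 1 ^ 2 = 1 := by
    have h := EuclideanSpace.norm_eq vs
    rw [hvs] at h
    have h' : Real.sqrt (vs 0 ^ 2 + vs 1 ^ 2) = 1 := by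
      rw [show vs 0 ^ 2 + vs 1 ^ 2 = ∑ i : Fin 2, ‖vs i‖ ^ 2 by
        simp [Fin.sum_univ_two, Real.norm_eq_abs, sq_abs]]
      exact h.symm
    nlinarith [Real.sq_sqrt (show (0:ℝ) ≤ vs 0 ^ 2 + vs 1 ^ 2 by positivity), h']
  have hvs0le : |vs 0| ≤ 1 := by nlinarith [sq_abs (vs 0), sq_abs (vs 1), sq_nonneg (vs 1), abs_nonneg (vs 0)]
  have hvs1le : |vs 1| ≤ 1 := by nlinarith [sq_abs (vs 0), sq_abs (vs 1), sq_nonneg (vs 0), abs_nonneg (vs 1)]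
  -- eigen equations in coordinates
  have e0 : (A 0 0 : ℝ) * vs 0 + (A 0 1 : ℝ) * vs 1 = l⁻¹ * vs 0 := by
    have h := congrFun heig 0
    simpa [hM, Matrix.mulVec, dotProduct, Fin.sum_univ_two, Matrix.map_apply] using h
  have e1 : (A 1 0 : ℝ) * vs 0 + (A 1 1 : ℝ) * vs 1 = l⁻¹ * vs 1 := by
    have h := congrFun heig 1
    simpa [hM, Matrix.mulVec, dotProduct, Fin.sum_univ_two, Matrix.map_apply] using h
  have hdetR : (A 0 0 : ℝ) * (A 1 1 : ℝ) - (A 0 1 : ℝ) * (A 1 0 : ℝ) = 1 := by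
    have h := Matrix.det_fin_two A
    rw [hdet] at h
    exact_mod_cast h.symm
  set μ := l⁻¹ with hμdef
  have hμ1 : |μ| < 1 := by
    rw [hμdef, abs_inv]
    rw [inv_lt_one_iff₀]; right; exact hl
  -- quadratic equation for μ
  have hq : μ^2 - ((A 0 0 + A 1 1 : ℤ) : ℝ) * μ + 1 = 0 := by
    have h0 : (μ^2 - ((A 0 0 : ℝ) + (A 1 1 : ℝ)) * μ + 1) * vs 0 = 0 := by
      linear_combination ((A 1 1 : ℝ) - μ) * e0 - (A 0 1 : ℝ) * e1 - vs 0 * hdetR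
    have h1 : (μ^2 - ((A 0 0 : ℝ) + (A 1 1 : ℝ)) * μ + 1) * vs 1 = 0 := by
      linear_combination ((A 0 0 : ℝ) - μ) * e1 - (A 1 0 : ℝ) * e0 - vs 1 * hdetR
    have hne : vs 0 ≠ 0 ∨ vs 1 ≠ 0 := by
      by_contra h
      push_neg at h
      rw [h.1, h.2] at hsum; norm_num at hsum
    push_cast
    rcases hne with h | h
    · rcases mul_eq_zero.1 h0 with h' | h'
      · linarith [h']
      · exact absurd h' h
    · rcases mul_eq_zero.1 h1 with h' | h'
      · linarith [h']
      · exact absurd h' h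
  have hμirr : Irrational μ := irrational_of_int_quadratic _ μ hq hμ1
  -- vs 0 ≠ 0 and slope irrational
  have hvs0 : vs 0 ≠ 0 := by
    intro h
    have hvs1 : vs 1 ≠ 0 := by
      intro h1; rw [h, h1] at hsum; norm_num at hsum
    rw [h] at e1
    have h11 : μ = (A 1 1 : ℝ) :=
      mul_right_cancel₀ hvs1 (by linarith [e1] : μ * vs 1 = (A 1 1 : ℝ) * vs 1)
    exact hμirr.ne_int (A 1 1) h11
  have hα : Irrational (vs 1 / vs 0) := by
    by_cases hb : (A 0 1 : ℝ) = 0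
    · exfalso
      rw [hb] at e0
      have : μ = (A 0 0 : ℝ) := by
        have := mul_right_cancel₀ hvs0 (by linarith [e0] : (A 0 0 : ℝ) * vs 0 = μ * vs 0)
        linarith [this]
      exact hμirr.ne_int (A 0 0) this
    · have hb' : (A 0 1 : ℤ) ≠ 0 := by exact_mod_cast hb
      have heq : vs 1 / vs 0 = (μ - (A 0 0 : ℝ)) / (A 0 1 : ℝ) := by
        rw [div_eq_div_iff hvs0 hb]
        linarith [e0]
      rw [heq]
      exact (hμirr.sub_intCast (A 0 0)).div_intCast hb'
  -- get the hitting data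
  obtain ⟨K, r, hK1, hr0, hr1, hhit⟩ :=
    interval_hit (vs 0) (vs 1) hvs0 hα hvs0le hvs1le U hUopen hUne
  have hK0 : (0:ℝ) < K := by linarith
  set C := |l| * K with hC
  set ν := r / (|l| * K) with hν
  have hC0 : (0:ℝ) < C := by positivity
  have hC1 : (1:ℝ) ≤ C := by nlinarith
  have hνmem : ν ∈ Set.Ioo (0:ℝ) 1 := by
    constructor
    · positivity
    · rw [hν, div_lt_one (by positivity)]
      nlinarith
  refine ⟨ν, hνmem, C, hC1, ?_⟩
  intro T hT x
  intro a b hab1 hab2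
  have hlT : (0:ℝ) < |l| ^ T := by positivity
  have hba : 0 < b - a := lt_of_lt_of_le (by positivity) hab1
  -- choose the smallest j with K ≤ |l|^j * (b-a)
  have hPT : K ≤ |l| ^ T * (b - a) := by
    have h1 : C / |l| ^ T ≤ b - a := hab1
    have h2 : C ≤ |l| ^ T * (b - a) := by
      rw [div_le_iff₀ hlT] at h1; linarith [h1]
    nlinarith
  have hex : ∃ j : ℕ, K ≤ |l| ^ j * (b - a) := ⟨T, hPT⟩
  obtain ⟨j, hj, hjmin⟩ : ∃ j : ℕ, K ≤ |l| ^ j * (b - a) ∧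
      ∀ i < j, ¬ K ≤ |l| ^ i * (b - a) :=
    ⟨Nat.find hex, Nat.find_spec hex, fun i hi => Nat.find_min hex hi⟩
  have hjT : j ≤ T := le_of_not_gt fun hTj => hjmin T hTj hPT
  have hupper : |l| ^ j * (b - a) ≤ |l| * K := by
    rcases Nat.eq_zero_or_pos j with h0 | hpos
    · rw [h0]
      simp only [pow_zero, one_mul]
      nlinarith
    · obtain ⟨n, rfl⟩ := Nat.exists_eq_succ_of_ne_zero (Nat.pos_iff_ne_zero.1 hpos)
      have hmin := hjmin n (Nat.lt_succ_self n)
      push_neg at hmin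
      rw [pow_succ]
      nlinarith
  set m := l ^ j with hmdef
  have hm0 : m ≠ 0 := pow_ne_zero _ hl0
  have habsm : |m| = |l| ^ j := abs_pow l j
  have habsm0 : (0:ℝ) < |m| := by rw [habsm]; positivity
  set y := (M⁻¹ ^ j).mulVec x with hy
  -- ν(b-a) ≤ r/|m|
  have hνr : ν * (b - a) ≤ r / |m| := by
    rw [hν, div_mul_eq_mul_div, div_le_div_iff₀ (by positivity) habsm0]
    have : (b - a) * |m| ≤ |l| * K := by rw [habsm, mul_comm]; exact hupper
    nlinarith [hr0]
  rcases hm0.lt_or_gt with hmneg | hmpos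
  · -- m < 0 : the t-interval is [b*m, a*m]
    have habsm' : |m| = -m := abs_of_neg hmneg
    have hKlohi : K ≤ a * m - b * m := by
      have h2 : |l| ^ j * (b - a) = a * m - b * m := by rw [← habsm, habsm']; ring
      linarith [hj]
    obtain ⟨c', hc'lo, hc'hi, hgood⟩ := hhit (y 0) (y 1) (b * m) (a * m) hKlohi
    have hcr : (c' + r) / m + r / |m| = c' / m := by
      rw [habsm', div_neg, ← sub_eq_add_neg, div_sub_div_same, add_sub_cancel_right]
    have hcb : c' / m ≤ b := by
      rw [div_le_iff_of_neg hmneg]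
      linarith [hc'lo]
    have hac : a ≤ (c' + r) / m := by
      rw [le_div_iff_of_neg hmneg]
      linarith [hc'hi]
    refine ⟨(c' + r) / m, (c' + r) / m + ν * (b - a), hac, by linarith [hνr, hcr, hcb],
      by ring, ?_⟩
    rw [Set.eq_empty_iff_forall_notMem]
    rintro s ⟨⟨hsc, hsd⟩, hsX⟩
    have hsm : s * m ∈ Icc c' (c' + r) := by
      have hsd' : s ≤ c' / m := by linarith [hνr, hcr]
      constructor
      · calc c' = (c' / m) * m := by field_simp
          _ ≤ s * m := by nlinarith [hsd']
      · calc s * m ≤ ((c' + r) / m) * m := by nlinarith [hsc]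
          _ = c' + r := by field_simp
    have hmem := hgood (s * m) hsm
    have hvec : ∀ i, ((M⁻¹ ^ j).mulVec (x + s • vs)) i = y i + (s * m) * vs i := by
      intro i
      have h1 : (M⁻¹ ^ j).mulVec (x + s • vs)
          = (M⁻¹ ^ j).mulVec x + s • (M⁻¹ ^ j).mulVec vs := by
        rw [Matrix.mulVec_add, Matrix.mulVec_smul]
      rw [h1, hstable j, hy, hmdef]
      simp only [Pi.add_apply, Pi.smul_apply, smul_eq_mul]
      ring
    have htp : torusProj (WithLp.toLp 2 ((M⁻¹ ^ j).mulVec (x + s • vs)))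
        = (((y 0 + (s * m) * vs 0 : ℝ) : AddCircle (1:ℝ)),
           ((y 1 + (s * m) * vs 1 : ℝ) : AddCircle (1:ℝ))) := by
      unfold torusProj
      rw [PiLp.toLp_apply, PiLp.toLp_apply, hvec 0, hvec 1]
    exact hsX j hjT (htp ▸ hmem)
  · -- 0 < m : the t-interval is [a*m, b*m]
    have habsm' : |m| = m := abs_of_pos hmpos
    have hKlohi : K ≤ b * m - a * m := by
      have h2 : |l| ^ j * (b - a) = b * m - a * m := by rw [← habsm, habsm']; ring
      linarith [hj]
    obtain ⟨c', hc'lo, hc'hi, hgood⟩ := hhit (y 0) (y 1) (a * m) (b * m) hKlohi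
    have hcr : c' / m + r / |m| = (c' + r) / m := by
      rw [habsm', ← add_div]
    have hcb : (c' + r) / m ≤ b := by
      rw [div_le_iff₀ hmpos]
      linarith [hc'hi]
    have hac : a ≤ c' / m := by
      rw [le_div_iff₀ hmpos]
      linarith [hc'lo]
    refine ⟨c' / m, c' / m + ν * (b - a), hac, by linarith [hνr, hcr, hcb], by ring, ?_⟩
    rw [Set.eq_empty_iff_forall_notMem]
    rintro s ⟨⟨hsc, hsd⟩, hsX⟩
    have hsm : s * m ∈ Icc c' (c' + r) := by
      have hsd' : s ≤ (c' + r) / m := by linarith [hνr, hcr]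
      constructor
      · calc c' = (c' / m) * m := by field_simp
          _ ≤ s * m := by nlinarith [hsc]
      · calc s * m ≤ ((c' + r) / m) * m := by nlinarith [hsd']
          _ = c' + r := by field_simp
    have hmem := hgood (s * m) hsm
    have hvec : ∀ i, ((M⁻¹ ^ j).mulVec (x + s • vs)) i = y i + (s * m) * vs i := by
      intro i
      have h1 : (M⁻¹ ^ j).mulVec (x + s • vs)
          = (M⁻¹ ^ j).mulVec x + s • (M⁻¹ ^ j).mulVec vs := by
        rw [Matrix.mulVec_add, Matrix.mulVec_smul]
      rw [h1, hstable j, hy, hmdef]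
      simp only [Pi.add_apply, Pi.smul_apply, smul_eq_mul]
      ring
    have htp : torusProj (WithLp.toLp 2 ((M⁻¹ ^ j).mulVec (x + s • vs)))
        = (((y 0 + (s * m) * vs 0 : ℝ) : AddCircle (1:ℝ)),
           ((y 1 + (s * m) * vs 1 : ℝ) : AddCircle (1:ℝ))) := by
      unfold torusProj
      rw [PiLp.toLp_apply, PiLp.toLp_apply, hvec 0, hvec 1]
    exact hsX j hjT (htp ▸ hmem)
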